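/- Let A be a real symmetric positive definite n×n matrix and B a real symmetric positive semidefinite n×n matrix. Then T = A^{-1/2}(A^{1/2} B A^{1/2})^{1/2} A^{-1/2} is the unique symmetric positive semidefinite solution of the Riccati equation T A T = B. -/

import Mathlib

open Matrix

namespace Matrix.PosSemidef

section

open scoped ComplexOrder

/-- The positive semidefinite square root of a positive semidefinite matrix, as defined in the
older Mathlib (`Matrix.PosSemidef.sqrt`, since removed). -/
noncomputable def sqrt {n : Type*} [Fintype n] [DecidableEq n] {𝕜 : Type*} [RCLike 𝕜]
    {A : Matrix n n 𝕜} (hA : PosSemidef A) : Matrix n n 𝕜 :=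
  hA.1.eigenvectorUnitary.1 * diagonal ((↑) ∘ (√·) ∘ hA.1.eigenvalues) *
  (star hA.1.eigenvectorUnitary : Matrix n n 𝕜)

lemma posSemidef_sqrt {n : Type*} [Fintype n] [DecidableEq n] {𝕜 : Type*} [RCLike 𝕜]
    {A : Matrix n n 𝕜} (hA : PosSemidef A) : PosSemidef hA.sqrt := by
  have hD : (diagonal ((↑) ∘ (√·) ∘ hA.1.eigenvalues : n → 𝕜)).PosSemidef := by
    rw [posSemidef_diagonal_iff]
    intro i
    simp only [Function.comp_apply, RCLike.ofReal_nonneg]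
    exact Real.sqrt_nonneg _
  exact hD.mul_mul_conjTranspose_same _

end

end Matrix.PosSemidef

/-- The matrix `A^{1/2} B A^{1/2}` is positive semidefinite. -/
lemma sandwich_psd {n : ℕ} {A B : Matrix (Fin n) (Fin n) ℝ} (hA : A.PosDef) (hB : B.PosSemidef) :
    (hA.posSemidef.sqrt * B * hA.posSemidef.sqrt).PosSemidef := by
  have h := hB.conjTranspose_mul_mul_same hA.posSemidef.sqrt
  rwa [hA.posSemidef.posSemidef_sqrt.isHermitian.eq] at h

namespace Matrix.PosSemidef

open scoped MatrixOrder

attribute [local instance] Matrix.instStarOrderedRing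

lemma sqrt_eq_cfc {m : ℕ} {A : Matrix (Fin m) (Fin m) ℝ} (hA : PosSemidef A) :
    hA.sqrt = CFC.sqrt A := by
  rw [CFC.sqrt_eq_real_sqrt A hA.nonneg, cfcₙ_eq_cfc, hA.1.cfc_eq]
  rfl

lemma sqrt_mul_self {m : ℕ} {A : Matrix (Fin m) (Fin m) ℝ} (hA : PosSemidef A) :
    hA.sqrt * hA.sqrt = A := by
  rw [sqrt_eq_cfc]
  exact CFC.sqrt_mul_sqrt_self A hA.nonneg

lemma eq_sqrt_of_sq_eq {m : ℕ} {A B : Matrix (Fin m) (Fin m) ℝ} (hA : PosSemidef A)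
    (hB : PosSemidef B) (hAB : A ^ 2 = B) : A = hB.sqrt := by
  rw [sqrt_eq_cfc]
  exact (CFC.sqrt_unique (by rw [← pow_two]; exact hAB) hA.nonneg).symm

end Matrix.PosSemidef

lemma sqrt_isUnit {n : ℕ} {A : Matrix (Fin n) (Fin n) ℝ} (hA : A.PosDef) :
    IsUnit hA.posSemidef.sqrt := by
  rw [Matrix.isUnit_iff_isUnit_det]
  have h : hA.posSemidef.sqrt * hA.posSemidef.sqrt = A := hA.posSemidef.sqrt_mul_self
  have hd : hA.posSemidef.sqrt.det * hA.posSemidef.sqrt.det = A.det := by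
    rw [← Matrix.det_mul, h]
  have : A.det ≠ 0 := hA.det_pos.ne'
  refine isUnit_iff_ne_zero.mpr fun h0 => this ?_
  rw [← hd, h0, zero_mul]

theorem riccati_solution_unique {n : ℕ} {A B : Matrix (Fin n) (Fin n) ℝ}
    (hA : A.PosDef) (hB : B.PosSemidef) :
    ((hA.posSemidef.sqrt)⁻¹ * (sandwich_psd hA hB).sqrt * (hA.posSemidef.sqrt)⁻¹).PosSemidef ∧
    ((hA.posSemidef.sqrt)⁻¹ * (sandwich_psd hA hB).sqrt * (hA.posSemidef.sqrt)⁻¹) * A *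
      ((hA.posSemidef.sqrt)⁻¹ * (sandwich_psd hA hB).sqrt * (hA.posSemidef.sqrt)⁻¹) = B ∧
    ∀ T : Matrix (Fin n) (Fin n) ℝ, T.PosSemidef → T * A * T = B →
      T = (hA.posSemidef.sqrt)⁻¹ * (sandwich_psd hA hB).sqrt * (hA.posSemidef.sqrt)⁻¹ := by
  set S := hA.posSemidef.sqrt with hS
  have hSunit : IsUnit S := sqrt_isUnit hA
  have hSinv : S * S⁻¹ = 1 := mul_nonsing_inv _ (isUnit_iff_isUnit_det _ |>.mp hSunit)
  have hSinv' : S⁻¹ * S = 1 := nonsing_inv_mul _ (isUnit_iff_isUnit_det _ |>.mp hSunit)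
  have hSherm : S⁻¹.IsHermitian := hA.posSemidef.posSemidef_sqrt.isHermitian.inv
  set C := (sandwich_psd hA hB).sqrt with hC
  have hCpsd : C.PosSemidef := (sandwich_psd hA hB).posSemidef_sqrt
  have hCC : C * C = S * B * S := (sandwich_psd hA hB).sqrt_mul_self
  have hSS : S * S = A := hA.posSemidef.sqrt_mul_self
  refine ⟨?_, ?_, ?_⟩
  · have h := hCpsd.conjTranspose_mul_mul_same S⁻¹
    rwa [hSherm.eq] at h
  · show S⁻¹ * C * S⁻¹ * A * (S⁻¹ * C * S⁻¹) = B
    have e1 : S⁻¹ * C * S⁻¹ * (S * S) * (S⁻¹ * C * S⁻¹) = B := by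
      rw [show S⁻¹ * C * S⁻¹ * (S * S) * (S⁻¹ * C * S⁻¹)
          = S⁻¹ * (C * ((S⁻¹ * S) * ((S * S⁻¹) * (C * S⁻¹)))) by simp only [Matrix.mul_assoc],
        hSinv, hSinv', one_mul, one_mul,
        show S⁻¹ * (C * (C * S⁻¹)) = S⁻¹ * (C * C) * S⁻¹ by simp only [Matrix.mul_assoc],
        hCC,
        show S⁻¹ * (S * B * S) * S⁻¹ = (S⁻¹ * S) * (B * (S * S⁻¹)) by
          simp only [Matrix.mul_assoc],
        hSinv, hSinv', one_mul, mul_one]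
    rwa [hSS] at e1
  · intro T hT hTAT
    have hSTS : (S * T * S).PosSemidef := by
      have h := hT.conjTranspose_mul_mul_same S
      rwa [hA.posSemidef.posSemidef_sqrt.isHermitian.eq] at h
    have hsq : (S * T * S) ^ 2 = S * B * S := by
      rw [pow_two]
      rw [← hTAT, ← hSS]
      simp only [Matrix.mul_assoc]
    have heq : S * T * S = C := hSTS.eq_sqrt_of_sq_eq (sandwich_psd hA hB) hsq
    rw [← heq]
    rw [show S⁻¹ * (S * T * S) * S⁻¹ = (S⁻¹ * S) * T * (S * S⁻¹) by
      simp only [Matrix.mul_assoc], hSinv, hSinv', one_mul, mul_one]
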